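/- Let c ≥ 0 and let p ∈ [2c, 2c+1]. The full-bundling utility u_p(x₁,x₂) = max{0, x₁ + x₂ − p} satisfies Rev_c(u_p) = p·(1 − (p−2c)²/2). -/

import Mathlib

open MeasureTheory Real Set

/-- Partial derivative of `u` with respect to the first coordinate
(defined via `deriv`; for Lipschitz `u` it exists a.e. by Rademacher). -/
noncomputable def pd1 (u : ℝ × ℝ → ℝ) (x : ℝ × ℝ) : ℝ := deriv (fun t => u (t, x.2)) x.1

/-- Partial derivative of `u` with respect to the second coordinate. -/
noncomputable def pd2 (u : ℝ × ℝ → ℝ) (x : ℝ × ℝ) : ℝ := deriv (fun t => u (x.1, t)) x.2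

/-- The square `[c, c+1]²`. -/
def box (c : ℝ) : Set (ℝ × ℝ) := Icc c (c + 1) ×ˢ Icc c (c + 1)

/-- The revenue of the (relaxed) mechanism induced by utility `u`:
`∫_{[c,c+1]²} (x₁ ∂u/∂x₁ + x₂ ∂u/∂x₂ − u)`. -/
noncomputable def Rev (c : ℝ) (u : ℝ × ℝ → ℝ) : ℝ :=
  ∫ x in box c, (x.1 * pd1 u x + x.2 * pd2 u x - u x)

/-- `Opt(c)`, the optimal value of the convexity-relaxed program for `0 ≤ c ≤ c̄`. -/
noncomputable def Opt (c : ℝ) : ℝ :=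
  2 / 27 * ((Real.sqrt 2 - 4) * c ^ 3
    + 3 * (Real.sqrt (c * (3 * c + 2)) + Real.sqrt 2 + 1) * c ^ 2
    + (2 * Real.sqrt (c * (3 * c + 2)) + 3 * Real.sqrt 2 + 12) * c
    + Real.sqrt 2 + 6)

/-- `BRev(c)`, the best full-bundling revenue. -/
noncomputable def BRev (c : ℝ) : ℝ :=
  2 / 27 * (-4 * c ^ 3 + Real.sqrt 2 * Real.sqrt ((2 * c ^ 2 + 3) ^ 3) + 18 * c)

/-- The critical constant `c̄ = √(15 − 8√2) − 2√2 + 1 ≈ 0.0915`. -/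
noncomputable def cbar : ℝ := Real.sqrt (15 - 8 * Real.sqrt 2) - 2 * Real.sqrt 2 + 1

/-- For `c ≥ 0` and `p ∈ [2c, 2c+1]`, the full-bundling utility
`u_p(x) = max{0, x₁ + x₂ − p}` has revenue `p·(1 − (p − 2c)²/2)`. -/
lemma line_null (p : ℝ) : volume {x : ℝ × ℝ | x.1 + x.2 = p} = 0 := by
  rw [Measure.volume_eq_prod, Measure.measure_prod_null]
  · filter_upwards with x
    have h : (Prod.mk x ⁻¹' {y : ℝ × ℝ | y.1 + y.2 = p}) = {p - x} := by
      ext y; simp [eq_sub_iff_add_eq, add_comm]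
    simp [h]
  · exact (isClosed_eq (by fun_prop) continuous_const).measurableSet

lemma pd1_eq_one (p x1 x2 : ℝ) (h : p < x1 + x2) :
    deriv (fun t => max 0 (t + x2 - p)) x1 = 1 := by
  have hmem : {t : ℝ | p < t + x2} ∈ nhds x1 :=
    (isOpen_lt continuous_const (by fun_prop)).mem_nhds h
  have hev : (fun t => max 0 (t + x2 - p)) =ᶠ[nhds x1] (fun t => t + x2 - p) :=
    Filter.eventuallyEq_of_mem hmem
      (fun t ht => max_eq_right (by simp only [mem_setOf_eq] at ht; linarith))
  rw [hev.deriv_eq]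
  exact (((hasDerivAt_id x1).add_const x2).sub_const p).deriv

lemma pd1_eq_zero (p x1 x2 : ℝ) (h : x1 + x2 < p) :
    deriv (fun t => max 0 (t + x2 - p)) x1 = 0 := by
  have hmem : {t : ℝ | t + x2 < p} ∈ nhds x1 :=
    (isOpen_lt (by fun_prop) continuous_const).mem_nhds h
  have hev : (fun t => max 0 (t + x2 - p)) =ᶠ[nhds x1] (fun _ => (0:ℝ)) :=
    Filter.eventuallyEq_of_mem hmem
      (fun t ht => max_eq_left (by simp only [mem_setOf_eq] at ht; linarith))
  rw [hev.deriv_eq, deriv_const]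

lemma pd2_eq_one (p x1 x2 : ℝ) (h : p < x1 + x2) :
    deriv (fun t => max 0 (x1 + t - p)) x2 = 1 := by
  have hmem : {t : ℝ | p < x1 + t} ∈ nhds x2 :=
    (isOpen_lt continuous_const (by fun_prop)).mem_nhds h
  have hev : (fun t => max 0 (x1 + t - p)) =ᶠ[nhds x2] (fun t => x1 + t - p) :=
    Filter.eventuallyEq_of_mem hmem
      (fun t ht => max_eq_right (by simp only [mem_setOf_eq] at ht; linarith))
  rw [hev.deriv_eq]
  exact (((hasDerivAt_id x2).const_add x1).sub_const p).deriv

lemma pd2_eq_zero (p x1 x2 : ℝ) (h : x1 + x2 < p) :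
    deriv (fun t => max 0 (x1 + t - p)) x2 = 0 := by
  have hmem : {t : ℝ | x1 + t < p} ∈ nhds x2 :=
    (isOpen_lt (by fun_prop) continuous_const).mem_nhds h
  have hev : (fun t => max 0 (x1 + t - p)) =ᶠ[nhds x2] (fun _ => (0:ℝ)) :=
    Filter.eventuallyEq_of_mem hmem
      (fun t ht => max_eq_left (by simp only [mem_setOf_eq] at ht; linarith))
  rw [hev.deriv_eq, deriv_const]

theorem revenue_of_full_bundling (c p : ℝ) (hc : 0 ≤ c)
    (hp : p ∈ Icc (2 * c) (2 * c + 1)) :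
    Rev c (fun x : ℝ × ℝ => max 0 (x.1 + x.2 - p))
      = p * (1 - (p - 2 * c) ^ 2 / 2) := by
  obtain ⟨hp1, hp2⟩ := hp
  set g : ℝ × ℝ → ℝ := fun x => if p < x.1 + x.2 then p else 0 with hg
  -- Step A: the integrand equals g a.e.
  have hae : (fun x : ℝ × ℝ => x.1 * pd1 (fun x : ℝ × ℝ => max 0 (x.1 + x.2 - p)) x
      + x.2 * pd2 (fun x : ℝ × ℝ => max 0 (x.1 + x.2 - p)) x
      - max 0 (x.1 + x.2 - p)) =ᵐ[volume] g := by
    have hne : ∀ᵐ x : ℝ × ℝ, x.1 + x.2 ≠ p := by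
      rw [ae_iff]; simpa using line_null p
    filter_upwards [hne] with x hx
    rcases lt_or_gt_of_ne hx with h | h
    · simp only [pd1, pd2, hg]
      rw [pd1_eq_zero p x.1 x.2 h, pd2_eq_zero p x.1 x.2 h, if_neg (by linarith),
        max_eq_left (by linarith)]
      ring
    · simp only [pd1, pd2, hg]
      rw [pd1_eq_one p x.1 x.2 h, pd2_eq_one p x.1 x.2 h, if_pos h,
        max_eq_right (by linarith)]
      ring
  have hRev : Rev c (fun x : ℝ × ℝ => max 0 (x.1 + x.2 - p)) = ∫ x in box c, g x := by
    exact integral_congr_ae (ae_restrict_of_ae hae)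
  rw [hRev]
  -- integrability of g on box
  have hS : MeasurableSet {x : ℝ × ℝ | p < x.1 + x.2} :=
    (isOpen_lt continuous_const (by fun_prop)).measurableSet
  have hgind : g = Set.indicator {x : ℝ × ℝ | p < x.1 + x.2} (fun _ => p) := by
    funext x; simp [hg, Set.indicator_apply]
  have hboxfin : volume (box c) < ⊤ :=
    (isCompact_Icc.prod isCompact_Icc).measure_lt_top
  have hint : IntegrableOn g (box c) := by
    rw [hgind]
    exact (integrableOn_const hboxfin.ne).indicator hS
  -- Step B: Fubini
  rw [box, Measure.volume_eq_prod] at hint ⊢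
  rw [setIntegral_prod _ hint]
  -- Step C: inner integral
  have hinner : ∀ x1 ∈ Icc c (c+1),
      (∫ x2 in Icc c (c+1), g (x1, x2)) = p * min 1 (x1 + c + 1 - p) := by
    intro x1 hx1
    obtain ⟨hx1a, hx1b⟩ := hx1
    have : (fun x2 => g (x1, x2)) = Set.indicator (Ioi (p - x1)) (fun _ => p) := by
      funext y
      simp only [hg, Set.indicator_apply, mem_Ioi]
      congr 1
      simp [sub_lt_iff_lt_add, eq_iff_iff, add_comm]
    rw [this, setIntegral_indicator measurableSet_Ioi, setIntegral_const, smul_eq_mul, mul_comm]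
    congr 1
    rcases le_or_gt c (p - x1) with h | h
    · have hseq : Icc c (c+1) ∩ Ioi (p - x1) = Ioc (p - x1) (c + 1) := by
        ext y
        simp only [mem_inter_iff, mem_Icc, mem_Ioi, mem_Ioc]
        constructor
        · rintro ⟨⟨_, h2⟩, h3⟩; exact ⟨h3, h2⟩
        · rintro ⟨h1, h2⟩; exact ⟨⟨by linarith, h2⟩, h1⟩
      rw [hseq, measureReal_def, Real.volume_Ioc, ENNReal.toReal_ofReal (by linarith)]
      rw [min_eq_right (by linarith)]
      ring
    · have hseq : Icc c (c+1) ∩ Ioi (p - x1) = Icc c (c + 1) := by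
        apply inter_eq_left.2
        intro y hy
        exact lt_of_lt_of_le h hy.1
      rw [hseq, measureReal_def, Real.volume_Icc, min_eq_left (by linarith)]
      simp
  rw [setIntegral_congr_fun measurableSet_Icc hinner]
  -- Step D: outer integral
  have hle : c ≤ c + 1 := by linarith
  have hm1 : c ≤ p - c := by linarith
  have hm2 : p - c ≤ c + 1 := by linarith
  have hcont : Continuous (fun x : ℝ => p * min 1 (x + c + 1 - p)) :=
    continuous_const.mul (continuous_const.min (by fun_prop))
  rw [MeasureTheory.integral_Icc_eq_integral_Ioc,
    ← intervalIntegral.integral_of_le hle,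
    ← intervalIntegral.integral_add_adjacent_intervals
      (a := c) (b := p - c) (c := c + 1)
      (hcont.intervalIntegrable _ _) (hcont.intervalIntegrable _ _)]
  have hpart1 : (∫ x in c..(p - c), p * min 1 (x + c + 1 - p))
      = p * (((p-c)^2 - c^2)/2 + (c + 1 - p) * (p - c - c)) := by
    rw [intervalIntegral.integral_congr (g := fun x => p * (x + (c + 1 - p)))
      (by
        intro x hx
        rw [uIcc_of_le hm1] at hx
        have h1 : x + c + 1 - p ≤ 1 := by
          have := hx.2; linarith
        show p * min 1 (x + c + 1 - p) = p * (x + (c + 1 - p))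
        rw [min_eq_right h1]; ring)]
    rw [intervalIntegral.integral_const_mul,
      intervalIntegral.integral_add (f := fun x => x) (g := fun _ => c + 1 - p)
        (continuous_id.intervalIntegrable _ _) intervalIntegrable_const,
      integral_id, intervalIntegral.integral_const, smul_eq_mul]
    ring
  have hpart2 : (∫ x in (p - c)..(c + 1), p * min 1 (x + c + 1 - p))
      = (c + 1 - (p - c)) * p := by
    rw [intervalIntegral.integral_congr (g := fun _ => p)
      (by
        intro x hx
        rw [uIcc_of_le hm2] at hx
        have h1 : (1:ℝ) ≤ x + c + 1 - p := by
          have := hx.1; linarith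
        show p * min 1 (x + c + 1 - p) = p
        rw [min_eq_left h1, mul_one])]
    rw [intervalIntegral.integral_const, smul_eq_mul]
  rw [hpart1, hpart2]
  ring
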